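/- Morphisms of standard automata are compatible with the product construction: let K be a semiring, P, P', Q, Q' finite types, and suppose given row vectors J : 1×P, J' : 1×P', Kr : 1×Q, K' : 1×Q', square matrices F : P×P, F' : P'×P', G : Q×Q, G' : Q'×Q', column vectors U : P×1, U' : P'×1, V : Q×1, V' : Q'×1, scalars x, y ∈ K, and transfer matrices X : P×P', Y : Q×Q' satisfying J·X = J', F·X = X·F', U = X·U', Kr·Y = K', G·Y = Y·G', and V = Y·V'. Then: (i) Matrix.fromBlocks F (U·Kr) 0 G · Matrix.fromBlocks X 0 0 Y = Matrix.fromBlocks X 0 0 Y · Matrix.fromBlocks F' (U'·K') 0 G'; (ii) the row vector with blocks (J, x • Kr) multiplied by Matrix.fromBlocks X 0 0 Y equals the row vector with blocks (J', x • K'); and (iii) the column vector with blocks (U·y, V) equals Matrix.fromBlocks X 0 0 Y multiplied by the column vector with blocks (U'·y, V'). Hence the product of the standard automata is conjugate to the product of their images. -/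

import Mathlib

/-- Morphisms of standard automata are compatible with the product
construction: given morphisms (conjugacies) `X : (J,F,U) → (J',F',U')` and
`Y : (Kr,G,V) → (K',G',V')` of the cores of two standard automata, the block
data of the product automaton is conjugate by `fromBlocks X 0 0 Y` to the
block data of the product of the images. -/
theorem product_standard_automata_morphism
    {K : Type*} [Semiring K] {P P' Q Q' : Type*}
    [Fintype P] [Fintype P'] [Fintype Q] [Fintype Q']
    (J : Matrix Unit P K) (J' : Matrix Unit P' K)
    (Kr : Matrix Unit Q K) (K' : Matrix Unit Q' K)
    (F : Matrix P P K) (F' : Matrix P' P' K)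
    (G : Matrix Q Q K) (G' : Matrix Q' Q' K)
    (U : Matrix P Unit K) (U' : Matrix P' Unit K)
    (V : Matrix Q Unit K) (V' : Matrix Q' Unit K)
    (x y : K)
    (X : Matrix P P' K) (Y : Matrix Q Q' K)
    (hJ : J * X = J') (hF : F * X = X * F') (hU : U = X * U')
    (hK : Kr * Y = K') (hG : G * Y = Y * G') (hV : V = Y * V') :
    Matrix.fromBlocks F (U * Kr) 0 G * Matrix.fromBlocks X 0 0 Y =
        Matrix.fromBlocks X 0 0 Y * Matrix.fromBlocks F' (U' * K') 0 G' ∧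
    Matrix.fromCols J (x • Kr) * Matrix.fromBlocks X 0 0 Y =
        Matrix.fromCols J' (x • K') ∧
    Matrix.fromRows (U * (y • (1 : Matrix Unit Unit K))) V =
        Matrix.fromBlocks X 0 0 Y *
          Matrix.fromRows (U' * (y • (1 : Matrix Unit Unit K))) V' := by
  refine ⟨?_, ?_, ?_⟩
  · rw [Matrix.fromBlocks_multiply, Matrix.fromBlocks_multiply]
    congr 1 <;> simp [hF, hG, hU, ← hK, Matrix.mul_assoc]
  · rw [Matrix.fromCols_mul_fromBlocks]
    simp [hJ, hK, Matrix.mul_smul]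
  · rw [Matrix.fromBlocks_mul_fromRows]
    simp [hU, hV, Matrix.mul_assoc]
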